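/- In the figure-eight knot group Γ = ⟨x, y | x y⁻¹ x⁻¹ y x y⁻¹ x y x⁻¹ y⁻¹⟩, the assignment φ(x) = x⁻¹, φ(y) = y x⁻¹ y⁻¹ x y⁻¹ extends to a group endomorphism of Γ (the relator is mapped to a trivial element), and φ fixes the longitude l = y x⁻¹ y⁻¹ x² y⁻¹ x⁻¹ y, i.e. φ(l) = l in Γ, while φ(m) = m⁻¹ for the meridian m = x. -/

import Mathlib

open Matrix

/-- The relator of the figure-eight knot group: x y⁻¹ x⁻¹ y x y⁻¹ x y x⁻¹ y⁻¹. -/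
def figEightRels : Set (FreeGroup (Fin 2)) :=
  { FreeGroup.of 0 * (FreeGroup.of 1)⁻¹ * (FreeGroup.of 0)⁻¹ * FreeGroup.of 1 *
    FreeGroup.of 0 * (FreeGroup.of 1)⁻¹ * FreeGroup.of 0 * FreeGroup.of 1 *
    (FreeGroup.of 0)⁻¹ * (FreeGroup.of 1)⁻¹ }

/-- The figure-eight knot group. -/
def FigEightGroup := PresentedGroup figEightRels

instance : Group FigEightGroup := by unfold FigEightGroup; infer_instance

def fig8x : FigEightGroup := PresentedGroup.of 0
def fig8y : FigEightGroup := PresentedGroup.of 1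

/-- The meridian m = x. -/
def fig8m : FigEightGroup := fig8x

/-- The longitude l = y x⁻¹ y⁻¹ x² y⁻¹ x⁻¹ y. -/
def fig8l : FigEightGroup :=
  fig8y * fig8x⁻¹ * fig8y⁻¹ * fig8x * fig8x * fig8y⁻¹ * fig8x⁻¹ * fig8y

lemma fig8_rel :
    fig8x * fig8y⁻¹ * fig8x⁻¹ * fig8y * fig8x * fig8y⁻¹ * fig8x * fig8y * fig8x⁻¹ * fig8y⁻¹
      = 1 := by
  show (PresentedGroup.mk figEightRels)
      (FreeGroup.of 0 * (FreeGroup.of 1)⁻¹ * (FreeGroup.of 0)⁻¹ * FreeGroup.of 1 *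
       FreeGroup.of 0 * (FreeGroup.of 1)⁻¹ * FreeGroup.of 0 * FreeGroup.of 1 *
       (FreeGroup.of 0)⁻¹ * (FreeGroup.of 1)⁻¹) = 1
  exact (QuotientGroup.eq_one_iff _).mpr
    (Subgroup.subset_normalClosure (Set.mem_singleton _))

/-- The assignment x ↦ x⁻¹, y ↦ y x⁻¹ y⁻¹ x y⁻¹ extends to an endomorphism φ of the
figure-eight knot group, which fixes the longitude and inverts the meridian. -/
theorem fig8_amphicheiral_endomorphism :
    ∃ φ : FigEightGroup →* FigEightGroup,
      φ fig8x = fig8x⁻¹ ∧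
      φ fig8y = fig8y * fig8x⁻¹ * fig8y⁻¹ * fig8x * fig8y⁻¹ ∧
      φ fig8l = fig8l ∧ φ fig8m = fig8m⁻¹ := by
  set x := fig8x with hx
  set y := fig8y with hy
  have rel := fig8_rel
  rw [← hx, ← hy] at rel
  set f : Fin 2 → FigEightGroup := ![x⁻¹, y * x⁻¹ * y⁻¹ * x * y⁻¹] with hf
  have h : ∀ r ∈ figEightRels, FreeGroup.lift f r = 1 := by
    intro r hr
    rw [figEightRels, Set.mem_singleton_iff] at hr
    subst hr
    simp only [_root_.map_mul, _root_.map_inv, FreeGroup.lift_apply_of, hf, Matrix.cons_val_zero,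
      Matrix.cons_val_one, Matrix.head_cons]
    calc x⁻¹ * (y * x⁻¹ * y⁻¹ * x * y⁻¹)⁻¹ * x⁻¹⁻¹ * (y * x⁻¹ * y⁻¹ * x * y⁻¹) *
          x⁻¹ * (y * x⁻¹ * y⁻¹ * x * y⁻¹)⁻¹ * x⁻¹ * (y * x⁻¹ * y⁻¹ * x * y⁻¹) *
          x⁻¹⁻¹ * (y * x⁻¹ * y⁻¹ * x * y⁻¹)⁻¹
        = ((x⁻¹ * y * y * x⁻¹) *
            (x * y⁻¹ * x⁻¹ * y * x * y⁻¹ * x * y * x⁻¹ * y⁻¹) *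
            (x⁻¹ * y * y * x⁻¹)⁻¹) *
          ((x⁻¹ * y * x⁻¹ * y * x⁻¹) *
            (x * y⁻¹ * x⁻¹ * y * x * y⁻¹ * x * y * x⁻¹ * y⁻¹)⁻¹ *
            (x⁻¹ * y * x⁻¹ * y * x⁻¹)⁻¹) *
          ((y * x⁻¹ * y⁻¹) *
            (x * y⁻¹ * x⁻¹ * y * x * y⁻¹ * x * y * x⁻¹ * y⁻¹)⁻¹ *
            (y * x⁻¹ * y⁻¹)⁻¹) := by group
      _ = 1 := by rw [rel]; group
  refine ⟨PresentedGroup.toGroup h, ?_, ?_, ?_, ?_⟩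
  · show PresentedGroup.toGroup h (PresentedGroup.of 0) = x⁻¹
    rw [PresentedGroup.toGroup.of]; simp [hf]
  · show PresentedGroup.toGroup h (PresentedGroup.of 1) = y * x⁻¹ * y⁻¹ * x * y⁻¹
    rw [PresentedGroup.toGroup.of]; simp [hf]
  · have h0 : PresentedGroup.toGroup h x = x⁻¹ := by
      rw [hx]; show PresentedGroup.toGroup h (PresentedGroup.of 0) = x⁻¹
      rw [PresentedGroup.toGroup.of]; simp [hf]
    have h1 : PresentedGroup.toGroup h y = y * x⁻¹ * y⁻¹ * x * y⁻¹ := by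
      rw [hy]; show PresentedGroup.toGroup h (PresentedGroup.of 1) = _
      rw [PresentedGroup.toGroup.of]; simp [hf]; rfl
    show PresentedGroup.toGroup h (y * x⁻¹ * y⁻¹ * x * x * y⁻¹ * x⁻¹ * y) = fig8l
    rw [fig8l, ← hx, ← hy]
    erw [_root_.map_mul, _root_.map_mul, _root_.map_mul, _root_.map_mul, _root_.map_mul,
      _root_.map_mul, _root_.map_mul, _root_.map_inv (PresentedGroup.toGroup h) x,
      _root_.map_inv (PresentedGroup.toGroup h) y, h0, h1]
    calc (y * x⁻¹ * y⁻¹ * x * y⁻¹) * x⁻¹⁻¹ * (y * x⁻¹ * y⁻¹ * x * y⁻¹)⁻¹ * x⁻¹ * x⁻¹ *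
          (y * x⁻¹ * y⁻¹ * x * y⁻¹)⁻¹ * x⁻¹⁻¹ * (y * x⁻¹ * y⁻¹ * x * y⁻¹)
        = ((y * x⁻¹ * y⁻¹ * x * x * y⁻¹ * x * y * x⁻¹ * y⁻¹) *
            (x * y⁻¹ * x⁻¹ * y * x * y⁻¹ * x * y * x⁻¹ * y⁻¹)⁻¹ *
            (y * x⁻¹ * y⁻¹ * x * x * y⁻¹ * x * y * x⁻¹ * y⁻¹)⁻¹) *
          ((y * x⁻¹ * y⁻¹ * x * x * y⁻¹ * x⁻¹ * y * y * x⁻¹) *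
            (x * y⁻¹ * x⁻¹ * y * x * y⁻¹ * x * y * x⁻¹ * y⁻¹) *
            (y * x⁻¹ * y⁻¹ * x * x * y⁻¹ * x⁻¹ * y * y * x⁻¹)⁻¹) *
          (y * x⁻¹ * y⁻¹ * x * x * y⁻¹ * x⁻¹ * y) := by group
      _ = y * x⁻¹ * y⁻¹ * x * x * y⁻¹ * x⁻¹ * y := by
            rw [rel]; group; simp [zpow_two, pow_two, mul_assoc]
  · show PresentedGroup.toGroup h (PresentedGroup.of 0) = fig8m⁻¹
    rw [PresentedGroup.toGroup.of]; simp [hf, fig8m, hx]
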